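/- Let (S,∘,∘̃) be an RLC-system, M a monoid, and ι : S → M a map satisfying ι(s)·ι(s∘t) = ι(t)·ι(t∘s) for all s,t in S. Then for all s₁,…,sₙ in S the equality Πₙ(s₁,…,sₙ) = Π̃ₙ(s̃₁,…,s̃ₙ) holds in M, where s̃ᵢ = Ωₙ(s₁,…,ŝᵢ,…,sₙ,sᵢ) (the i-th entry omitted from the list and placed last). -/

import Mathlib

/-- The right-cyclic law: `(x∘y)∘(x∘z) = (y∘x)∘(y∘z)`. -/
def RCLaw {S : Type*} (op : S → S → S) : Prop :=
  ∀ x y z : S, op (op x y) (op x z) = op (op y x) (op y z)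

/-- The left-cyclic law: `(z∘̃x)∘̃(y∘̃x) = (z∘̃y)∘̃(x∘̃y)`. -/
def LCLaw {S : Type*} (opL : S → S → S) : Prop :=
  ∀ x y z : S, opL (opL z x) (opL y x) = opL (opL z y) (opL x y)

/-- The monomials `Ωₙ`: `OmegaFin op n x` is `Ω_{n+1}(x₀,…,xₙ)`, defined by `Ω₁(x₁) = x₁` and
`Ωₙ(x₁,…,xₙ) = Ω_{n−1}(x₁,…,x_{n−1}) ∘ Ω_{n−1}(x₁,…,x_{n−2},xₙ)`. -/
def OmegaFin {S : Type*} (op : S → S → S) : (n : ℕ) → (Fin (n + 1) → S) → S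
  | 0, x => x 0
  | n + 1, x =>
      op (OmegaFin op n fun i => x i.castSucc)
         (OmegaFin op n fun i => if (i : ℕ) = n then x (Fin.last (n + 1)) else x i.castSucc)

/-- The monomials `Ω̃ₙ`: `OmegaTFin opL n x` is `Ω̃_{n+1}(x₀,…,xₙ)`, defined by `Ω̃₁(x₁) = x₁`
and `Ω̃ₙ(x₁,…,xₙ) = Ω̃_{n−1}(x₁,x₃,…,xₙ) ∘̃ Ω̃_{n−1}(x₂,…,xₙ)`. -/
def OmegaTFin {S : Type*} (opL : S → S → S) : (n : ℕ) → (Fin (n + 1) → S) → S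
  | 0, x => x 0
  | n + 1, x =>
      opL (OmegaTFin opL n fun i => x ((1 : Fin (n + 2)).succAbove i))
          (OmegaTFin opL n fun i => x i.succ)

/-- `Πₙ(x₁,…,xₙ) = ι(Ω₁(x₁))·ι(Ω₂(x₁,x₂))·…·ι(Ωₙ(x₁,…,xₙ))`, computed in the monoid `M`. -/
def PiFin {S M : Type*} [Monoid M] (op : S → S → S) (ι : S → M) (n : ℕ) (x : Fin n → S) : M :=
  ((List.finRange n).map fun i =>
    ι (OmegaFin op i.val fun j : Fin (i.val + 1) => x (Fin.castLE i.isLt j))).prod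

/-- `Π̃ₙ(x₁,…,xₙ) = ι(Ω̃ₙ(x₁,…,xₙ))·ι(Ω̃_{n−1}(x₂,…,xₙ))·…·ι(Ω̃₁(xₙ))`, computed in `M`. -/
def PiTFin {S M : Type*} [Monoid M] (opL : S → S → S) (ι : S → M) :
    (n : ℕ) → (Fin n → S) → M
  | 0, _ => 1
  | n + 1, x => ι (OmegaTFin opL n x) * PiTFin opL ι n fun i => x i.succ

/- ### Auxiliary lemmas -/

theorem omega_shift {S : Type*} (op : S → S → S) :
    ∀ (n : ℕ) (x : Fin (n + 2) → S),
      OmegaFin op (n + 1) x = OmegaFin op n fun i => op (x 0) (x i.succ) := by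
  intro n
  induction n with
  | zero => intro x; simp [OmegaFin]
  | succ m ih =>
      intro x
      show op (OmegaFin op (m+1) fun i => x i.castSucc)
             (OmegaFin op (m+1) fun i => if (i : ℕ) = m+1 then x (Fin.last (m + 2)) else x i.castSucc)
           = _
      rw [ih, ih]
      show _ = op (OmegaFin op m fun i => op (x 0) (x i.succ.castSucc))
             (OmegaFin op m fun i => if (i : ℕ) = m then op (x 0) (x (Fin.last (m+1)).succ) else op (x 0) (x i.castSucc.succ))
      congr 1
      all_goals congr 1
      all_goals funext i
      all_goals try simp [Fin.succ_castSucc, -Fin.castSucc_succ]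
      all_goals by_cases h : (i : ℕ) = m <;> simp [h, Fin.succ_castSucc, -Fin.castSucc_succ]

theorem omega_swap {S : Type*} (op : S → S → S) (hRC : RCLaw op) (n : ℕ)
    (x y : Fin (n + 3) → S) (h0 : y 0 = x 1) (h1 : y 1 = x 0)
    (h : ∀ i : Fin (n + 1), y i.succ.succ = x i.succ.succ) :
    OmegaFin op (n + 2) x = OmegaFin op (n + 2) y := by
  rw [omega_shift, omega_shift, omega_shift, omega_shift]
  congr 1
  funext j
  have e0 : ((0 : Fin (n + 2)).succ) = 1 := rfl
  rw [e0, h0, h1, h j]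
  exact hRC (x 0) (x 1) (x j.succ.succ)

/-- The vector `s̃` of entries `s̃ᵢ = Ωₙ(s₁,…,ŝᵢ,…,sₙ,sᵢ)`. -/
def tildeVec {S : Type*} (op : S → S → S) (n : ℕ) (s : Fin (n + 1) → S) : Fin (n + 1) → S :=
  fun i => OmegaFin op n (Fin.snoc (fun m : Fin n => s (i.succAbove m)) (s i))

theorem claimB {S : Type*} (op : S → S → S) (n : ℕ) (s : Fin (n + 2) → S) (j : Fin (n + 1)) :
    tildeVec op (n + 1) s j.succ = tildeVec op n (fun k => op (s 0) (s k.succ)) j := by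
  unfold tildeVec
  rw [omega_shift]
  have hX0 : (Fin.snoc (fun m : Fin (n+1) => s (j.succ.succAbove m)) (s j.succ) : Fin (n+2) → S) 0 = s 0 := by
    rw [show (0 : Fin (n+2)) = Fin.castSucc 0 from rfl, Fin.snoc_castSucc, Fin.succ_succAbove_zero]; rfl
  congr 1
  funext k
  refine Fin.lastCases ?_ (fun k => ?_) k
  · simp [Fin.succ_last, Fin.succ_succAbove_zero, hX0]
  · simp [Fin.succ_castSucc, -Fin.castSucc_succ, Fin.snoc_castSucc, Fin.succ_succAbove_zero,
      Fin.succ_succAbove_succ, hX0]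

lemma snoc_zero'' {α : Type*} {n : ℕ} (f : Fin (n+1) → α) (a : α) :
    (Fin.snoc f a : Fin (n+2) → α) 0 = f 0 := by
  rw [show (0 : Fin (n+2)) = Fin.castSucc 0 by simp, Fin.snoc_castSucc]

lemma snoc_one'' {α : Type*} {n : ℕ} (f : Fin (n+2) → α) (a : α) :
    (Fin.snoc f a : Fin (n+3) → α) 1 = f 1 := by
  rw [show (1 : Fin (n+3)) = Fin.castSucc 1 by simp, Fin.snoc_castSucc]

lemma succAbove_zero' {n : ℕ} (p : Fin (n+2)) (hp : 0 < p.val) :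
    p.succAbove (0 : Fin (n+1)) = 0 := by
  rw [Fin.succAbove_of_castSucc_lt]
  · simp
  · rw [Fin.lt_def, Fin.coe_castSucc, Fin.val_zero]; omega

lemma succAbove_one' {n : ℕ} (p : Fin (n+3)) (hp : 1 < p.val) :
    p.succAbove (1 : Fin (n+2)) = 1 := by
  rw [Fin.succAbove_of_castSucc_lt]
  · simp
  · simp [Fin.lt_def]; omega

lemma one_succAbove' {n : ℕ} (i : Fin n) :
    (1 : Fin (n+2)).succAbove i.succ = i.succ.succ := by
  have h : (1 : Fin (n+2)) ≤ (i.succ).castSucc := by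
    rw [Fin.le_def]
    simp
  rw [Fin.succAbove_of_le_castSucc _ _ h]

theorem head_eq_lemma {S : Type*} (op : S → S → S) (hRC : RCLaw op) (m : ℕ)
    (s u : Fin (m + 2) → S) (hu0 : u 0 = s 1) (hu1 : u 1 = s 0)
    (hu2 : ∀ j : Fin m, u j.succ.succ = s j.succ.succ) (i : Fin (m + 1)) :
    tildeVec op (m+1) s ((1 : Fin (m+2)).succAbove i) = tildeVec op (m+1) u i.succ := by
  refine Fin.cases ?_ (fun i' => ?_) i
  · rw [show (1 : Fin (m+2)).succAbove 0 = 0 from succAbove_zero' _ (by simp)]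
    rw [Fin.succ_zero_eq_one]
    unfold tildeVec
    congr 1
    refine congrArg₂ _ (funext fun k => ?_) hu1.symm
    refine Fin.cases ?_ (fun k' => ?_) k
    · rw [show ((0:Fin (m+2)).succAbove 0) = 1 by rw [Fin.zero_succAbove, Fin.succ_zero_eq_one],
        show ((1:Fin (m+2)).succAbove 0) = 0 from succAbove_zero' _ (by simp), hu0]
    · rw [Fin.zero_succAbove, one_succAbove', hu2]
  · rw [one_succAbove']
    cases m with
    | zero => exact i'.elim0
    | succ m' =>
      unfold tildeVec
      set p : Fin (m' + 3) := i'.succ.succ with hp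
      have hpv : 1 < p.val := by simp [hp]
      apply omega_swap op hRC
      · rw [snoc_zero'', snoc_one'',
          succAbove_zero' p (by omega), succAbove_one' p hpv, hu0]
      · rw [snoc_zero'', snoc_one'',
          succAbove_zero' p (by omega), succAbove_one' p hpv, hu1]
      · intro j
        refine Fin.lastCases ?_ (fun j' => ?_) j
        · rw [show ((Fin.last m').succ.succ) = Fin.last (m'+2) by
            rw [Fin.succ_last, Fin.succ_last]]
          rw [Fin.snoc_last, Fin.snoc_last, hp]
          exact hu2 i'
        · rw [show (j'.castSucc.succ.succ) = (j'.succ.succ).castSucc by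
            rw [Fin.succ_castSucc, Fin.succ_castSucc]]
          rw [Fin.snoc_castSucc, Fin.snoc_castSucc]
          have hq : 2 ≤ (p.succAbove j'.succ.succ).val := by
            rcases lt_or_ge (j'.succ.succ).castSucc p with h | h
            · rw [Fin.succAbove_of_castSucc_lt _ _ h]; simp
            · rw [Fin.succAbove_of_le_castSucc _ _ h]; simp
          obtain ⟨w, hw⟩ : ∃ w : Fin (m'+1), p.succAbove j'.succ.succ = w.succ.succ := by
            refine ⟨⟨(p.succAbove j'.succ.succ).val - 2, by
              have := (p.succAbove j'.succ.succ).isLt; omega⟩, ?_⟩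
            rw [Fin.ext_iff]
            simp
            omega
          rw [hw, hu2]

theorem claimA {S : Type*} (op opL : S → S → S) (hRC : RCLaw op)
    (hinv : ∀ x y : S, opL (op y x) (op x y) = x ∧ op (opL y x) (opL x y) = x) :
    ∀ (n : ℕ) (s : Fin (n + 1) → S), OmegaTFin opL n (tildeVec op n s) = s 0 := by
  intro n
  induction n with
  | zero =>
      intro s
      show tildeVec op 0 s 0 = s 0
      unfold tildeVec
      show (Fin.snoc (fun m : Fin 0 => s ((0:Fin 1).succAbove m)) (s 0) : Fin 1 → S) 0 = s 0
      rw [show (0 : Fin 1) = Fin.last 0 from rfl, Fin.snoc_last]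
  | succ m ih =>
      intro s
      set u : Fin (m + 2) → S :=
        Fin.cons (s 1) (Fin.cons (s 0) (fun j : Fin m => s j.succ.succ)) with hu
      have hu0 : u 0 = s 1 := by rw [hu, Fin.cons_zero]
      have hu1 : u 1 = s 0 := by
        rw [hu, ← Fin.succ_zero_eq_one, Fin.cons_succ, Fin.cons_zero]
      have hu2 : ∀ j : Fin m, u j.succ.succ = s j.succ.succ := by
        intro j; rw [hu, Fin.cons_succ, Fin.cons_succ]
      show opL (OmegaTFin opL m fun i => tildeVec op (m+1) s ((1 : Fin (m+2)).succAbove i))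
               (OmegaTFin opL m fun i => tildeVec op (m+1) s i.succ) = s 0
      rw [show (fun i : Fin (m+1) => tildeVec op (m+1) s ((1 : Fin (m+2)).succAbove i))
            = fun i => tildeVec op (m+1) u i.succ from
          funext (head_eq_lemma op hRC m s u hu0 hu1 hu2)]
      rw [show (fun i : Fin (m+1) => tildeVec op (m+1) u i.succ)
            = tildeVec op m (fun k => op (u 0) (u k.succ)) from funext (claimB op m u)]
      rw [show (fun i : Fin (m+1) => tildeVec op (m+1) s i.succ)
            = tildeVec op m (fun k => op (s 0) (s k.succ)) from funext (claimB op m s)]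
      rw [ih, ih]
      rw [Fin.succ_zero_eq_one, hu0, hu1]
      exact (hinv (s 0) (s 1)).1

theorem pi_split {S M : Type*} [Monoid M] (op : S → S → S) (ι : S → M) (n : ℕ)
    (s : Fin (n + 1) → S) :
    PiFin op ι (n + 1) s = ι (s 0) * PiFin op ι n (fun j => op (s 0) (s j.succ)) := by
  unfold PiFin
  rw [List.finRange_succ, List.map_cons, List.prod_cons, List.map_map]
  congr 1
  refine congrArg (fun f => (List.map f (List.finRange n)).prod) (funext fun i => ?_)
  simp only [Function.comp]
  rw [show (OmegaFin op ((i.succ : Fin (n+1)).val)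
        fun j : Fin ((i.succ : Fin (n+1)).val + 1) => s (Fin.castLE i.succ.isLt j))
      = OmegaFin op (i.val + 1) (fun j : Fin (i.val + 2) => s (Fin.castLE i.succ.isLt j)) from rfl]
  rw [omega_shift]
  refine congrArg ι (congrArg _ (funext fun j => ?_))
  rfl

/-- If `(S,∘,∘̃)` is an RLC-system and `ι : S → M` satisfies
`ι(s)·ι(s∘t) = ι(t)·ι(t∘s)`, then `Πₙ(s₁,…,sₙ) = Π̃ₙ(s̃₁,…,s̃ₙ)` in `M`, where
`s̃ᵢ = Ωₙ(s₁,…,ŝᵢ,…,sₙ,sᵢ)`. -/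
theorem statement6 {S M : Type*} [Monoid M] (op opL : S → S → S)
    (hRC : RCLaw op) (hLC : LCLaw opL)
    (hinv : ∀ x y : S, opL (op y x) (op x y) = x ∧ op (opL y x) (opL x y) = x)
    (ι : S → M) (hι : ∀ s t : S, ι s * ι (op s t) = ι t * ι (op t s)) :
    ∀ (n : ℕ) (s : Fin (n + 1) → S),
      PiFin op ι (n + 1) s =
        PiTFin opL ι (n + 1) fun i : Fin (n + 1) =>
          OmegaFin op n (Fin.snoc (fun m : Fin n => s (i.succAbove m)) (s i)) := by
  intro n
  induction n with
  | zero =>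
      intro s
      show PiFin op ι 1 s = PiTFin opL ι 1 (tildeVec op 0 s)
      have h1 : PiFin op ι 1 s = ι (s 0) := by
        simp [PiFin, List.finRange, OmegaFin]
      have h3 : tildeVec op 0 s 0 = s 0 := by
        unfold tildeVec
        show (Fin.snoc (fun m : Fin 0 => s ((0:Fin 1).succAbove m)) (s 0) : Fin 1 → S) 0 = s 0
        rw [show (0 : Fin 1) = Fin.last 0 from rfl, Fin.snoc_last]
      have h2 : PiTFin opL ι 1 (tildeVec op 0 s) = ι (s 0) := by
        show ι (OmegaTFin opL 0 (tildeVec op 0 s)) * 1 = _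
        rw [mul_one, show OmegaTFin opL 0 (tildeVec op 0 s) = tildeVec op 0 s 0 from rfl, h3]
      rw [h1, h2]
  | succ m ih =>
      intro s
      show PiFin op ι (m + 2) s = PiTFin opL ι (m + 2) (tildeVec op (m+1) s)
      rw [pi_split, ih (fun j => op (s 0) (s j.succ))]
      show _ = ι (OmegaTFin opL (m+1) (tildeVec op (m+1) s))
             * PiTFin opL ι (m+1) (fun i => tildeVec op (m+1) s i.succ)
      rw [claimA op opL hRC hinv (m+1) s]
      rw [show (fun i : Fin (m+1) => tildeVec op (m+1) s i.succ)
            = tildeVec op m (fun k => op (s 0) (s k.succ)) from funext (claimB op m s)]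
      rfl
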